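/- arXiv:2412.19100 — 3 statements merged into one kernel-verified Lean document; each statement's English description precedes it below -/
import Mathlib

section
/- Let δ > 0 and ε > 0. Assume R₂ is positive semidefinite and FᵀF ≥ δ I_{m₂}. Let P₁ ≥ 0, P₂ ≥ 0 and Γ₁, Γ₂ ∈ ℝ^{n₂} satisfy P₁ + Γ_{1k} ≥ ε and P₂ + Γ_{2k} ≥ ε for every k = 1, …, n₂. Then for any nonempty closed set Π₂ ⊆ ℝ^{m₂}, the function v ↦ H₁₂(v, P₁, P₂, Γ₁, Γ₂) is coercive (tends to +∞ as |v| → ∞) and attains its infimum over Π₂; in particular the infimum is finite. -/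
open Matrix

/-- The jump Hamiltonian `H₁₂(v,P₁,P₂,Γ₁,Γ₂)`. -/
noncomputable def H12 {m₂ n₂ : ℕ} (R₂ : Matrix (Fin m₂) (Fin m₂) ℝ)
    (B₂ : EuclideanSpace ℝ (Fin m₂)) (E : EuclideanSpace ℝ (Fin n₂))
    (F : Matrix (Fin n₂) (Fin m₂) ℝ) (v : EuclideanSpace ℝ (Fin m₂))
    (P₁ P₂ : ℝ) (Γ₁ Γ₂ : EuclideanSpace ℝ (Fin n₂)) : ℝ :=
  (∑ i, ∑ j, v i * R₂ i j * v j)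
    + (∑ k, (P₁ + Γ₁ k) * ((max (1 + E k + ∑ j, F k j * v j) 0) ^ 2 - 1))
    - 2 * P₁ * (∑ k, (E k + ∑ j, F k j * v j))
    + 2 * P₁ * (∑ i, B₂ i * v i)
    + ∑ k, (P₂ + Γ₂ k) * (max (-(1 + E k + ∑ j, F k j * v j)) 0) ^ 2

lemma H12_aux_pt (p q ε x : ℝ) (hp : ε ≤ p) (hq : ε ≤ q) :
    ε * x ^ 2 - p ≤ p * ((max x 0) ^ 2 - 1) + q * (max (-x) 0) ^ 2 := by
  rcases le_total 0 x with h | h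
  · rw [max_eq_left h, max_eq_right (neg_nonpos.mpr h)]
    nlinarith [sq_nonneg x]
  · rw [max_eq_right h, max_eq_left (neg_nonneg.mpr h)]
    nlinarith [sq_nonneg x]

lemma H12_coord_le_norm {m : ℕ} (v : EuclideanSpace ℝ (Fin m)) (j : Fin m) :
    |v j| ≤ ‖v‖ := by
  have hnorm : ‖v‖ ^ 2 = ∑ i, (v i) ^ 2 := by
    rw [EuclideanSpace.norm_eq, Real.sq_sqrt (by positivity)]
    simp [sq_abs]
  have h1 : (v j) ^ 2 ≤ ‖v‖ ^ 2 := by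
    rw [hnorm]
    exact Finset.single_le_sum (fun i _ => sq_nonneg (v i)) (Finset.mem_univ j)
  have := Real.sqrt_le_sqrt h1
  rwa [Real.sqrt_sq_eq_abs, Real.sqrt_sq (norm_nonneg v)] at this

/-- Key lower bound: `H12` dominates a positive-definite quadratic minus linear terms. -/
lemma H12_lower_bound {m₂ n₂ : ℕ}
    (R₂ : Matrix (Fin m₂) (Fin m₂) ℝ) (B₂ : EuclideanSpace ℝ (Fin m₂))
    (E : EuclideanSpace ℝ (Fin n₂)) (F : Matrix (Fin n₂) (Fin m₂) ℝ)
    (δ ε : ℝ) (hδ : 0 < δ) (hε : 0 < ε)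
    (hR₂ : R₂.PosSemidef)
    (hF : ((Fᵀ * F) - δ • (1 : Matrix (Fin m₂) (Fin m₂) ℝ)).PosSemidef)
    (P₁ P₂ : ℝ) (hP₁ : 0 ≤ P₁) (hP₂ : 0 ≤ P₂)
    (Γ₁ Γ₂ : EuclideanSpace ℝ (Fin n₂))
    (hΓ₁ : ∀ k, ε ≤ P₁ + Γ₁ k) (hΓ₂ : ∀ k, ε ≤ P₂ + Γ₂ k) :
    ∀ v : EuclideanSpace ℝ (Fin m₂),
      ε * δ / 2 * ‖v‖ ^ 2
        - (2 * P₁ * ((∑ k, ∑ j, |F k j|) + ∑ i, |B₂ i|)) * ‖v‖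
        - (ε * (∑ k, (1 + E k) ^ 2) + (∑ k, (P₁ + Γ₁ k)) + 2 * P₁ * (∑ k, E k))
      ≤ H12 R₂ B₂ E F v P₁ P₂ Γ₁ Γ₂ := by
  intro v
  have hnorm : ‖v‖ ^ 2 = ∑ i, (v i) ^ 2 := by
    rw [EuclideanSpace.norm_eq, Real.sq_sqrt (by positivity)]
    simp [sq_abs]
  -- quadratic in R₂ is nonnegative
  have hq : 0 ≤ ∑ i, ∑ j, v i * R₂ i j * v j := by
    have := hR₂.dotProduct_mulVec_nonneg v
    simpa [dotProduct, mulVec, Finset.mul_sum, mul_assoc] using this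
  -- F quadratic bound
  have hFq : δ * ∑ i, (v i) ^ 2 ≤ ∑ k, (∑ j, F k j * v j) ^ 2 := by
    have h := hF.dotProduct_mulVec_nonneg v
    simp only [star_trivial] at h
    have h1 : dotProduct v ((Fᵀ * F) *ᵥ v) = ∑ k, (∑ j, F k j * v j) ^ 2 := by
      rw [← mulVec_mulVec, dotProduct_mulVec, vecMul_transpose]
      simp [dotProduct, mulVec, sq]
    have h2 : dotProduct v ((δ • (1 : Matrix (Fin m₂) (Fin m₂) ℝ)) *ᵥ v)
        = δ * ∑ i, (v i) ^ 2 := by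
      simp [smul_mulVec, dotProduct, sq, Finset.mul_sum, mul_left_comm]
    rw [sub_mulVec, dotProduct_sub, h1, h2] at h
    · linarith [h]
  -- hinge terms lower bound
  have hhinge : ∑ k, (ε * (1 + E k + ∑ j, F k j * v j) ^ 2 - (P₁ + Γ₁ k))
      ≤ (∑ k, (P₁ + Γ₁ k) * ((max (1 + E k + ∑ j, F k j * v j) 0) ^ 2 - 1))
        + ∑ k, (P₂ + Γ₂ k) * (max (-(1 + E k + ∑ j, F k j * v j)) 0) ^ 2 := by
    rw [← Finset.sum_add_distrib]
    exact Finset.sum_le_sum fun k _ => H12_aux_pt _ _ _ _ (hΓ₁ k) (hΓ₂ k)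
  -- halving inequality
  have hhalf : ∀ k, (∑ j, F k j * v j) ^ 2 / 2 - (1 + E k) ^ 2
      ≤ (1 + E k + ∑ j, F k j * v j) ^ 2 := fun k => by
    nlinarith [sq_nonneg ((∑ j, F k j * v j) + 2 * (1 + E k))]
  have hhalfsum : (∑ k, (∑ j, F k j * v j) ^ 2) / 2 - ∑ k, (1 + E k) ^ 2
      ≤ ∑ k, (1 + E k + ∑ j, F k j * v j) ^ 2 := by
    have := Finset.sum_le_sum fun k (_ : k ∈ Finset.univ) => hhalf k
    calc (∑ k, (∑ j, F k j * v j) ^ 2) / 2 - ∑ k, (1 + E k) ^ 2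
        = ∑ k, ((∑ j, F k j * v j) ^ 2 / 2 - (1 + E k) ^ 2) := by
          rw [Finset.sum_sub_distrib, Finset.sum_div]
      _ ≤ _ := this
  -- linear term bounds
  have hlin1 : |∑ k, ∑ j, F k j * v j| ≤ (∑ k, ∑ j, |F k j|) * ‖v‖ := by
    calc |∑ k, ∑ j, F k j * v j| ≤ ∑ k, |∑ j, F k j * v j| :=
          Finset.abs_sum_le_sum_abs _ _
      _ ≤ ∑ k, ∑ j, |F k j * v j| :=
          Finset.sum_le_sum fun k _ => Finset.abs_sum_le_sum_abs _ _
      _ ≤ ∑ k, ∑ j, |F k j| * ‖v‖ := by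
          refine Finset.sum_le_sum fun k _ => Finset.sum_le_sum fun j _ => ?_
          rw [abs_mul]
          exact mul_le_mul_of_nonneg_left (H12_coord_le_norm v j) (abs_nonneg _)
      _ = (∑ k, ∑ j, |F k j|) * ‖v‖ := by
          rw [Finset.sum_mul]; congr 1; ext k; rw [Finset.sum_mul]
  have hlin2 : |∑ i, B₂ i * v i| ≤ (∑ i, |B₂ i|) * ‖v‖ := by
    calc |∑ i, B₂ i * v i| ≤ ∑ i, |B₂ i * v i| := Finset.abs_sum_le_sum_abs _ _
      _ ≤ ∑ i, |B₂ i| * ‖v‖ := by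
          refine Finset.sum_le_sum fun i _ => ?_
          rw [abs_mul]
          exact mul_le_mul_of_nonneg_left (H12_coord_le_norm v i) (abs_nonneg _)
      _ = (∑ i, |B₂ i|) * ‖v‖ := by rw [Finset.sum_mul]
  -- assemble
  unfold H12
  have hsum : ε * δ / 2 * ‖v‖ ^ 2 - ε * (∑ k, (1 + E k) ^ 2) - (∑ k, (P₁ + Γ₁ k))
      ≤ (∑ k, (P₁ + Γ₁ k) * ((max (1 + E k + ∑ j, F k j * v j) 0) ^ 2 - 1))
        + ∑ k, (P₂ + Γ₂ k) * (max (-(1 + E k + ∑ j, F k j * v j)) 0) ^ 2 := by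
    have h3 : ε * ((∑ k, (∑ j, F k j * v j) ^ 2) / 2 - ∑ k, (1 + E k) ^ 2)
        ≤ ε * ∑ k, (1 + E k + ∑ j, F k j * v j) ^ 2 :=
      mul_le_mul_of_nonneg_left hhalfsum hε.le
    have h4 : ∑ k, (ε * (1 + E k + ∑ j, F k j * v j) ^ 2 - (P₁ + Γ₁ k))
        = ε * (∑ k, (1 + E k + ∑ j, F k j * v j) ^ 2) - ∑ k, (P₁ + Γ₁ k) := by
      rw [Finset.sum_sub_distrib, Finset.mul_sum]
    have h5 : ε * δ / 2 * ‖v‖ ^ 2 ≤ ε * ((∑ k, (∑ j, F k j * v j) ^ 2) / 2) := by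
      rw [hnorm]
      nlinarith [hFq]
    nlinarith [hhinge]
  have hE : - 2 * P₁ * (∑ k, E k)
      - (2 * P₁ * ((∑ k, ∑ j, |F k j|) + ∑ i, |B₂ i|)) * ‖v‖
      ≤ - 2 * P₁ * (∑ k, (E k + ∑ j, F k j * v j)) + 2 * P₁ * (∑ i, B₂ i * v i) := by
    have e1 : ∑ k, (E k + ∑ j, F k j * v j)
        = (∑ k, E k) + ∑ k, ∑ j, F k j * v j := Finset.sum_add_distrib
    rw [e1]
    have a1 := le_abs_self (∑ k, ∑ j, F k j * v j)
    have a2 := neg_abs_le (∑ i, B₂ i * v i)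
    nlinarith [mul_le_mul_of_nonneg_left hlin1 hP₁,
      mul_le_mul_of_nonneg_left hlin2 hP₁,
      mul_le_mul_of_nonneg_left a1 hP₁, mul_le_mul_of_nonneg_left a2 hP₁]
  linarith [hq, hsum, hE]

/-- In the singular case `R₂ ≥ 0`, `FᵀF ≥ δ I`, with `P₁, P₂ ≥ 0` and `P_j + Γ_{jk} ≥ ε`, the
map `v ↦ H₁₂(v,P₁,P₂,Γ₁,Γ₂)` is coercive and attains its infimum over any nonempty closed
set. -/
theorem H12_coercive_attains_min_singular
    (m₂ n₂ : ℕ) (hm : 0 < m₂) (hn : 0 < n₂)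
    (R₂ : Matrix (Fin m₂) (Fin m₂) ℝ) (B₂ : EuclideanSpace ℝ (Fin m₂))
    (E : EuclideanSpace ℝ (Fin n₂)) (F : Matrix (Fin n₂) (Fin m₂) ℝ)
    (δ ε : ℝ) (hδ : 0 < δ) (hε : 0 < ε)
    (hR₂ : R₂.PosSemidef)
    (hF : ((Fᵀ * F) - δ • (1 : Matrix (Fin m₂) (Fin m₂) ℝ)).PosSemidef)
    (P₁ P₂ : ℝ) (hP₁ : 0 ≤ P₁) (hP₂ : 0 ≤ P₂)
    (Γ₁ Γ₂ : EuclideanSpace ℝ (Fin n₂))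
    (hΓ₁ : ∀ k, ε ≤ P₁ + Γ₁ k) (hΓ₂ : ∀ k, ε ≤ P₂ + Γ₂ k)
    (Cone2 : Set (EuclideanSpace ℝ (Fin m₂)))
    (hne : Cone2.Nonempty) (hclosed : IsClosed Cone2) :
    (∀ c : ℝ, ∃ r : ℝ, ∀ v : EuclideanSpace ℝ (Fin m₂),
        r ≤ ‖v‖ → c ≤ H12 R₂ B₂ E F v P₁ P₂ Γ₁ Γ₂) ∧
      ∃ v ∈ Cone2, ∀ w ∈ Cone2,
        H12 R₂ B₂ E F v P₁ P₂ Γ₁ Γ₂ ≤ H12 R₂ B₂ E F w P₁ P₂ Γ₁ Γ₂ := by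
  set a : ℝ := ε * δ / 2 with ha
  set K : ℝ := 2 * P₁ * ((∑ k, ∑ j, |F k j|) + ∑ i, |B₂ i|) with hK
  set C : ℝ := ε * (∑ k, (1 + E k) ^ 2) + (∑ k, (P₁ + Γ₁ k)) + 2 * P₁ * (∑ k, E k)
    with hC
  have ha0 : 0 < a := by positivity
  have hK0 : 0 ≤ K := by
    have : (0:ℝ) ≤ (∑ k, ∑ j, |F k j|) + ∑ i, |B₂ i| := by positivity
    positivity
  have hlb : ∀ v : EuclideanSpace ℝ (Fin m₂),
      a * ‖v‖ ^ 2 - K * ‖v‖ - C ≤ H12 R₂ B₂ E F v P₁ P₂ Γ₁ Γ₂ :=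
    H12_lower_bound R₂ B₂ E F δ ε hδ hε hR₂ hF P₁ P₂ hP₁ hP₂ Γ₁ Γ₂ hΓ₁ hΓ₂
  have hcoer : ∀ c : ℝ, ∃ r : ℝ, ∀ v : EuclideanSpace ℝ (Fin m₂),
      r ≤ ‖v‖ → c ≤ H12 R₂ B₂ E F v P₁ P₂ Γ₁ Γ₂ := by
    intro c
    refine ⟨max 1 ((K + |C| + |c|) / a), fun v hv => ?_⟩
    have h1 : 1 ≤ ‖v‖ := le_trans (le_max_left _ _) hv
    have h2 : (K + |C| + |c|) / a ≤ ‖v‖ := le_trans (le_max_right _ _) hv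
    have h3 : K + |C| + |c| ≤ a * ‖v‖ := by
      rw [div_le_iff₀ ha0] at h2; linarith [h2]
    have h4 := hlb v
    nlinarith [le_abs_self c, neg_abs_le C, le_abs_self C, abs_nonneg c, abs_nonneg C]
  refine ⟨hcoer, ?_⟩
  -- attainment
  obtain ⟨v₀, hv₀⟩ := hne
  have hcont : Continuous fun v : EuclideanSpace ℝ (Fin m₂) =>
      H12 R₂ B₂ E F v P₁ P₂ Γ₁ Γ₂ := by
    unfold H12
    have hcoord : ∀ i : Fin m₂, Continuous fun v : EuclideanSpace ℝ (Fin m₂) => v i :=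
      fun i => (EuclideanSpace.proj i).continuous
    fun_prop
  obtain ⟨r, hr⟩ := hcoer (H12 R₂ B₂ E F v₀ P₁ P₂ Γ₁ Γ₂)
  set R : ℝ := max r ‖v₀‖ with hR
  have hv₀ball : v₀ ∈ Metric.closedBall (0 : EuclideanSpace ℝ (Fin m₂)) R := by
    simp [hR, le_max_right]
  set Kset := Cone2 ∩ Metric.closedBall (0 : EuclideanSpace ℝ (Fin m₂)) R with hKset
  have hKcomp : IsCompact Kset :=
    (isCompact_closedBall (0 : EuclideanSpace ℝ (Fin m₂)) R).inter_left hclosed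
  have hKne : Kset.Nonempty := ⟨v₀, hv₀, hv₀ball⟩
  obtain ⟨v, hvK, hvmin⟩ := hKcomp.exists_isMinOn hKne hcont.continuousOn
  refine ⟨v, hvK.1, fun w hw => ?_⟩
  by_cases hwb : w ∈ Metric.closedBall (0 : EuclideanSpace ℝ (Fin m₂)) R
  · exact hvmin ⟨hw, hwb⟩
  · have h1 : H12 R₂ B₂ E F v P₁ P₂ Γ₁ Γ₂ ≤ H12 R₂ B₂ E F v₀ P₁ P₂ Γ₁ Γ₂ :=
      hvmin ⟨hv₀, hv₀ball⟩
    have h2 : r ≤ ‖w‖ := by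
      simp only [Metric.mem_closedBall, dist_zero_right, not_le] at hwb
      exact le_trans (le_max_left _ _) hwb.le
    exact le_trans h1 (hr w h2)
end

section
/- Let δ > 0, assume R₂ ≥ δ I_{m₂}, and let P ≥ 0. Then H₁₂(v, P, P, 0, 0) ≥ −δ⁻¹ |B₂|² P² for every v ∈ ℝ^{m₂}. -/
open Matrix

/-- If `R₂ ≥ δ I` and `P ≥ 0`, then `H₁₂(v,P,P,0,0) ≥ -δ⁻¹ |B₂|² P²` for every `v`. -/
theorem H12_diagonal_lower_bound_standard
    (m₂ n₂ : ℕ) (hm : 0 < m₂) (hn : 0 < n₂)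
    (R₂ : Matrix (Fin m₂) (Fin m₂) ℝ) (B₂ : EuclideanSpace ℝ (Fin m₂))
    (E : EuclideanSpace ℝ (Fin n₂)) (F : Matrix (Fin n₂) (Fin m₂) ℝ)
    (δ : ℝ) (hδ : 0 < δ)
    (hR₂ : (R₂ - δ • (1 : Matrix (Fin m₂) (Fin m₂) ℝ)).PosSemidef)
    (P : ℝ) (hP : 0 ≤ P) :
    ∀ v : EuclideanSpace ℝ (Fin m₂),
      -δ⁻¹ * ‖B₂‖ ^ 2 * P ^ 2 ≤
        H12 R₂ B₂ E F v P P (0 : EuclideanSpace ℝ (Fin n₂))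
          (0 : EuclideanSpace ℝ (Fin n₂)) := by
  intro v
  -- quadratic-form bound
  have hQ : δ * ∑ i, v i * v i ≤ ∑ i, ∑ j, v i * R₂ i j * v j := by
    have h0 := hR₂.dotProduct_mulVec_nonneg (fun i => v i)
    simp only [star_trivial, dotProduct, Matrix.mulVec, Matrix.sub_apply,
      Matrix.smul_apply, Matrix.one_apply, smul_eq_mul, mul_ite, mul_one, mul_zero,
      ite_mul, zero_mul, Finset.sum_ite_eq, Finset.mem_univ, if_true,
      sub_mul, mul_sub, Finset.sum_sub_distrib] at h0
    rw [sub_nonneg] at h0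
    calc δ * ∑ i, v i * v i = ∑ x, v x * (δ * v x) := by
          rw [Finset.mul_sum]; exact Finset.sum_congr rfl fun i _ => by ring
      _ ≤ ∑ x, v x * ∑ j, R₂ x j * v j := h0
      _ = _ := Finset.sum_congr rfl fun i _ => by
          rw [Finset.mul_sum]; exact Finset.sum_congr rfl fun i _ => by ring
  -- jump terms collapse
  have hJ : (∑ k, (P + (0 : EuclideanSpace ℝ (Fin n₂)) k) *
        ((max (1 + E k + ∑ j, F k j * v j) 0) ^ 2 - 1))
      - 2 * P * (∑ k, (E k + ∑ j, F k j * v j))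
      + ∑ k, (P + (0 : EuclideanSpace ℝ (Fin n₂)) k) *
        (max (-(1 + E k + ∑ j, F k j * v j)) 0) ^ 2
      = ∑ k, P * (E k + ∑ j, F k j * v j) ^ 2 := by
    simp only [PiLp.zero_apply, add_zero, Finset.mul_sum]
    rw [← Finset.sum_sub_distrib, ← Finset.sum_add_distrib]
    refine Finset.sum_congr rfl fun k _ => ?_
    rcases le_total 0 (1 + E k + ∑ j, F k j * v j) with h | h
    · rw [max_eq_left h, max_eq_right (by linarith : -(1 + E k + ∑ j, F k j * v j) ≤ 0)]; ring
    · rw [max_eq_right h, max_eq_left (by linarith : (0:ℝ) ≤ -(1 + E k + ∑ j, F k j * v j))]; ring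
  have hH : H12 R₂ B₂ E F v P P (0 : EuclideanSpace ℝ (Fin n₂))
        (0 : EuclideanSpace ℝ (Fin n₂))
      = (∑ i, ∑ j, v i * R₂ i j * v j) + 2 * P * (∑ i, B₂ i * v i)
        + ∑ k, P * (E k + ∑ j, F k j * v j) ^ 2 := by
    unfold H12; linarith [hJ]
  rw [hH]
  -- positivity of the squares term
  have hS : 0 ≤ ∑ k, P * (E k + ∑ j, F k j * v j) ^ 2 :=
    Finset.sum_nonneg fun k _ => mul_nonneg hP (sq_nonneg _)
  -- inner product facts
  have hb : (∑ i, B₂ i * v i) = inner ℝ B₂ v := by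
    rw [PiLp.inner_apply]; exact Finset.sum_congr rfl fun i _ => by simp [mul_comm]
  have hcs : |(inner ℝ B₂ v : ℝ)| ≤ ‖B₂‖ * ‖v‖ := abs_real_inner_le_norm _ _
  have hvv : (∑ i, v i * v i) = ‖v‖ ^ 2 := by
    rw [← real_inner_self_eq_norm_sq, PiLp.inner_apply]; rfl
  rw [hb]
  have hbl : -(‖B₂‖ * ‖v‖) ≤ (inner ℝ B₂ v : ℝ) := neg_le_of_abs_le hcs
  have key : -δ⁻¹ * ‖B₂‖ ^ 2 * P ^ 2 ≤ δ * ‖v‖ ^ 2 + 2 * P * (inner ℝ B₂ v : ℝ) := by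
    have h1 : 0 ≤ (δ * ‖v‖ - P * ‖B₂‖) ^ 2 := sq_nonneg _
    have h3 : 0 < δ⁻¹ := inv_pos.2 hδ
    have h4 : 0 ≤ δ⁻¹ * (δ * ‖v‖ - P * ‖B₂‖) ^ 2 := mul_nonneg h3.le h1
    have h5 : δ⁻¹ * (δ * ‖v‖ - P * ‖B₂‖) ^ 2
        = δ * ‖v‖ ^ 2 - 2 * P * ‖v‖ * ‖B₂‖ + δ⁻¹ * P ^ 2 * ‖B₂‖ ^ 2 := by
      field_simp; ring
    rw [h5] at h4
    have h6 := mul_le_mul_of_nonneg_left hbl (by linarith : (0:ℝ) ≤ 2 * P)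
    nlinarith [h4, h6]
  have hQ' := hQ
  rw [hvv] at hQ'
  linarith
end

section
/- Let δ > 0, M > 0, K > 0, and assume: R₂ ≥ δ I_{m₂}; |R₂| ≤ K, |B₂| ≤ K, |E| ≤ K, |F| ≤ K; 0 ≤ P₁ ≤ M, 0 ≤ P₂ ≤ M; and 0 ≤ P₁ + Γ_{1k} ≤ M, 0 ≤ P₂ + Γ_{2k} ≤ M for every k = 1, …, n₂. Then there exists a constant c > 0, depending only on δ, M, K and n₂ (and not on R₂, B₂, E, F, P₁, P₂, Γ₁, Γ₂ themselves), such that H₁₂(v, P₁, P₂, Γ₁, Γ₂) > H₁₂(0, P₁, P₂, Γ₁, Γ₂) for all v ∈ ℝ^{m₂} with |v| > c. Consequently, for every closed cone Π₂ ⊆ ℝ^{m₂} containing 0, one has inf_{v ∈ Π₂} H₁₂(v, P₁, P₂, Γ₁, Γ₂) = inf_{v ∈ Π₂, |v| ≤ c} H₁₂(v, P₁, P₂, Γ₁, Γ₂), and every minimizer of H₁₂(·, P₁, P₂, Γ₁, Γ₂) over Π₂ has norm at most c. -/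
open Matrix

/-- Frobenius norm of a real matrix. -/
noncomputable def frob {m n : ℕ} (M : Matrix (Fin m) (Fin n) ℝ) : ℝ :=
  Real.sqrt (∑ i, ∑ j, (M i j) ^ 2)

lemma quad_lb {m : ℕ} (δ : ℝ) (R : Matrix (Fin m) (Fin m) ℝ)
    (h : (R - δ • (1 : Matrix (Fin m) (Fin m) ℝ)).PosSemidef)
    (v : EuclideanSpace ℝ (Fin m)) :
    δ * ‖v‖ ^ 2 ≤ ∑ i, ∑ j, v i * R i j * v j := by
  have h2 := h.dotProduct_mulVec_nonneg (fun i => v i)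
  have hn : ‖v‖ ^ 2 = ∑ i, v i ^ 2 := by
    rw [EuclideanSpace.norm_eq, Real.sq_sqrt (by positivity)]; simp [sq_abs]
  have key : (star (fun i => v i) ⬝ᵥ ((R - δ • (1 : Matrix (Fin m) (Fin m) ℝ)) *ᵥ fun i => v i))
      = (∑ i, ∑ j, v i * R i j * v j) - δ * ∑ i, v i ^ 2 := by
    simp only [dotProduct, Matrix.mulVec, Matrix.sub_apply, Matrix.smul_apply,
      Matrix.one_apply, star, smul_eq_mul, mul_ite, mul_one, mul_zero, sub_mul, ite_mul,
      Finset.mul_sum, mul_sub, Finset.sum_sub_distrib, zero_mul, id,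
      Finset.sum_ite_eq, Finset.mem_univ, if_true]
    congr 1
    · exact Finset.sum_congr rfl fun i _ => Finset.sum_congr rfl fun j _ => by ring
    · exact Finset.sum_congr rfl fun i _ => by ring
  rw [key] at h2
  rw [hn]; linarith

lemma row_lb {a b : ℕ} (F : Matrix (Fin a) (Fin b) ℝ) (k : Fin a)
    (w : EuclideanSpace ℝ (Fin b)) (hw : ∀ j, w j = F k j) :
    ‖w‖ ≤ frob F := by
  rw [EuclideanSpace.norm_eq, frob]
  apply Real.sqrt_le_sqrt
  calc ∑ j, ‖w j‖ ^ 2 = ∑ j, F k j ^ 2 := by simp [hw, sq_abs]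
    _ ≤ ∑ i, ∑ j, F i j ^ 2 :=
        Finset.single_le_sum (f := fun i => ∑ j, F i j ^ 2)
          (fun i _ => by positivity) (Finset.mem_univ k)

lemma inner_bd {n : ℕ} (w v : EuclideanSpace ℝ (Fin n)) :
    |∑ i, w i * v i| ≤ ‖w‖ * ‖v‖ := by
  have h := abs_real_inner_le_norm w v
  simpa [PiLp.inner_apply, RCLike.inner_apply, mul_comm] using h

lemma coord_bd {n : ℕ} (E : EuclideanSpace ℝ (Fin n)) (k : Fin n) : |E k| ≤ ‖E‖ := by
  rw [EuclideanSpace.norm_eq]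
  rw [show |E k| = Real.sqrt (|E k| ^ 2) from (Real.sqrt_sq (abs_nonneg _)).symm]
  apply Real.sqrt_le_sqrt
  exact Finset.single_le_sum (f := fun i => ‖E i‖ ^ 2) (fun i _ => by positivity)
    (Finset.mem_univ k)

lemma H12_lb {m₂ n₂ : ℕ} (δ M K : ℝ) (hδ : 0 < δ) (hM : 0 < M) (hK : 0 < K)
    (R₂ : Matrix (Fin m₂) (Fin m₂) ℝ) (B₂ : EuclideanSpace ℝ (Fin m₂))
    (E : EuclideanSpace ℝ (Fin n₂)) (F : Matrix (Fin n₂) (Fin m₂) ℝ)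
    (P₁ P₂ : ℝ) (Γ₁ Γ₂ : EuclideanSpace ℝ (Fin n₂))
    (hpsd : (R₂ - δ • (1 : Matrix (Fin m₂) (Fin m₂) ℝ)).PosSemidef)
    (hB : ‖B₂‖ ≤ K) (hE : ‖E‖ ≤ K) (hF : frob F ≤ K)
    (hP₁0 : 0 ≤ P₁) (hP₁M : P₁ ≤ M)
    (hΓ₁ : ∀ k, 0 ≤ P₁ + Γ₁ k ∧ P₁ + Γ₁ k ≤ M)
    (hΓ₂ : ∀ k, 0 ≤ P₂ + Γ₂ k ∧ P₂ + Γ₂ k ≤ M)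
    (v : EuclideanSpace ℝ (Fin m₂)) :
    δ * ‖v‖ ^ 2 - (2 * M * n₂ * K + 2 * M * K) * ‖v‖ - (n₂ * M + 2 * M * n₂ * K)
      ≤ H12 R₂ B₂ E F v P₁ P₂ Γ₁ Γ₂ := by
  set t := ‖v‖ with ht
  have ht0 : 0 ≤ t := norm_nonneg v
  have hQ := quad_lb δ R₂ hpsd v
  have hg : ∀ k, |∑ j, F k j * v j| ≤ K * t := by
    intro k
    have h1 := inner_bd (WithLp.toLp 2 (fun j => F k j) : EuclideanSpace ℝ (Fin m₂)) v
    have h2 := row_lb F k (WithLp.toLp 2 (fun j => F k j) : EuclideanSpace ℝ (Fin m₂)) (fun j => rfl)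
    have h3 : (0:ℝ) ≤ ‖(WithLp.toLp 2 (fun j => F k j) : EuclideanSpace ℝ (Fin m₂))‖ := norm_nonneg _
    nlinarith [abs_nonneg (∑ j, F k j * v j)]
  have hEk : ∀ k, |E k| ≤ K := fun k => (coord_bd E k).trans hE
  have hS1 : -(n₂ * M) ≤ ∑ k, (P₁ + Γ₁ k) * ((max (1 + E k + ∑ j, F k j * v j) 0) ^ 2 - 1) := by
    have hterm : ∀ k ∈ Finset.univ, -M ≤ (P₁ + Γ₁ k) *
        ((max (1 + E k + ∑ j, F k j * v j) 0) ^ 2 - 1) := by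
      intro k _
      nlinarith [(hΓ₁ k).1, (hΓ₁ k).2, sq_nonneg (max (1 + E k + ∑ j, F k j * v j) 0)]
    calc -(n₂ * M) = ∑ _k : Fin n₂, (-M) := by
          rw [Finset.sum_const, Finset.card_univ, Fintype.card_fin, nsmul_eq_mul]; ring
      _ ≤ _ := Finset.sum_le_sum hterm
  have hSE : |∑ k, (E k + ∑ j, F k j * v j)| ≤ n₂ * (K + K * t) := by
    calc |∑ k, (E k + ∑ j, F k j * v j)| ≤ ∑ k, |E k + ∑ j, F k j * v j| :=
          Finset.abs_sum_le_sum_abs _ _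
      _ ≤ ∑ _k : Fin n₂, (K + K * t) :=
          Finset.sum_le_sum fun k _ => (abs_add_le _ _).trans (add_le_add (hEk k) (hg k))
      _ = n₂ * (K + K * t) := by
          rw [Finset.sum_const, Finset.card_univ, Fintype.card_fin, nsmul_eq_mul]
  have hNE : (0:ℝ) ≤ n₂ * (K + K * t) := by positivity
  have h3 : -(2 * M * (n₂ * (K + K * t))) ≤ -(2 * P₁ * (∑ k, (E k + ∑ j, F k j * v j))) := by
    have h := abs_le.1 hSE
    nlinarith [h.1, h.2]
  have hBv := inner_bd B₂ v
  have h4 : -(2 * M * (K * t)) ≤ 2 * P₁ * (∑ i, B₂ i * v i) := by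
    have h := abs_le.1 hBv
    have hS : -(K * t) ≤ ∑ i, B₂ i * v i := by
      nlinarith [h.1, mul_nonneg (sub_nonneg.2 hB) ht0]
    nlinarith [mul_nonneg hP₁0 (by linarith : (0:ℝ) ≤ (∑ i, B₂ i * v i) + K * t),
      mul_nonneg (sub_nonneg.2 hP₁M) (mul_nonneg hK.le ht0)]
  have hS2 : 0 ≤ ∑ k, (P₂ + Γ₂ k) * (max (-(1 + E k + ∑ j, F k j * v j)) 0) ^ 2 :=
    Finset.sum_nonneg fun k _ => mul_nonneg (hΓ₂ k).1 (sq_nonneg _)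
  unfold H12
  nlinarith [hQ, hS1, h3, h4, hS2]

lemma H12_zero_ub {m₂ n₂ : ℕ} (M K : ℝ) (hM : 0 < M) (hK : 0 < K)
    (R₂ : Matrix (Fin m₂) (Fin m₂) ℝ) (B₂ : EuclideanSpace ℝ (Fin m₂))
    (E : EuclideanSpace ℝ (Fin n₂)) (F : Matrix (Fin n₂) (Fin m₂) ℝ)
    (P₁ P₂ : ℝ) (Γ₁ Γ₂ : EuclideanSpace ℝ (Fin n₂))
    (hE : ‖E‖ ≤ K) (hP₁0 : 0 ≤ P₁) (hP₁M : P₁ ≤ M)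
    (hΓ₁ : ∀ k, 0 ≤ P₁ + Γ₁ k ∧ P₁ + Γ₁ k ≤ M)
    (hΓ₂ : ∀ k, 0 ≤ P₂ + Γ₂ k ∧ P₂ + Γ₂ k ≤ M) :
    H12 R₂ B₂ E F (0 : EuclideanSpace ℝ (Fin m₂)) P₁ P₂ Γ₁ Γ₂
      ≤ n₂ * (2 * M * (1 + K) ^ 2 + 2 * M * K) := by
  have hEk : ∀ k, |E k| ≤ K := fun k => (coord_bd E k).trans hE
  have hzero : ∀ i, (0 : EuclideanSpace ℝ (Fin m₂)) i = 0 := fun i => rfl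
  unfold H12
  simp only [hzero, mul_zero, zero_mul, Finset.sum_const_zero, add_zero]
  rw [Finset.mul_sum]
  have hA : ∑ k, (P₁ + Γ₁ k) * ((max (1 + E k) 0) ^ 2 - 1) ≤ ∑ _k : Fin n₂, M * (1 + K) ^ 2 := by
    apply Finset.sum_le_sum
    intro k _
    have h := abs_le.1 (hEk k)
    have hm1 : max (1 + E k) 0 ≤ 1 + K := max_le (by linarith) (by linarith)
    have hm10 : 0 ≤ max (1 + E k) 0 := le_max_right _ _
    have hx2 : (max (1 + E k) 0) ^ 2 ≤ (1 + K) ^ 2 := by nlinarith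
    have h1 : (P₁ + Γ₁ k) * ((max (1 + E k) 0) ^ 2 - 1) ≤ (P₁ + Γ₁ k) * (max (1 + E k) 0) ^ 2 := by
      nlinarith [(hΓ₁ k).1]
    have h2 : (P₁ + Γ₁ k) * (max (1 + E k) 0) ^ 2 ≤ M * (max (1 + E k) 0) ^ 2 :=
      mul_le_mul_of_nonneg_right (hΓ₁ k).2 (sq_nonneg _)
    have h3 : M * (max (1 + E k) 0) ^ 2 ≤ M * (1 + K) ^ 2 :=
      mul_le_mul_of_nonneg_left hx2 hM.le
    linarith
  have hB2 : ∑ _k : Fin n₂, (-(2 * M * K)) ≤ ∑ k, 2 * P₁ * E k := by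
    apply Finset.sum_le_sum
    intro k _
    have h := abs_le.1 (hEk k)
    nlinarith
  have hC : ∑ k, (P₂ + Γ₂ k) * (max (-(1 + E k)) 0) ^ 2 ≤ ∑ _k : Fin n₂, M * (1 + K) ^ 2 := by
    apply Finset.sum_le_sum
    intro k _
    have h := abs_le.1 (hEk k)
    have hm2 : max (-(1 + E k)) 0 ≤ 1 + K := max_le (by linarith) (by linarith)
    have hm20 : 0 ≤ max (-(1 + E k)) 0 := le_max_right _ _
    have hx2 : (max (-(1 + E k)) 0) ^ 2 ≤ (1 + K) ^ 2 := by nlinarith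
    have h2 : (P₂ + Γ₂ k) * (max (-(1 + E k)) 0) ^ 2 ≤ M * (max (-(1 + E k)) 0) ^ 2 :=
      mul_le_mul_of_nonneg_right (hΓ₂ k).2 (sq_nonneg _)
    have h3 : M * (max (-(1 + E k)) 0) ^ 2 ≤ M * (1 + K) ^ 2 :=
      mul_le_mul_of_nonneg_left hx2 hM.le
    linarith
  rw [Finset.sum_const, Finset.card_univ, Fintype.card_fin, nsmul_eq_mul] at hA hB2 hC
  linarith

/-- Uniform reduction of the constrained infimum of `H₁₂` to a bounded domain: under
`R₂ ≥ δI`, Frobenius/Euclidean bounds `K` on the data, and the a priori bounds `M` on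
`P₁, P₂, P_j + Γ_{jk}`, there is a constant `c` depending only on `δ, M, K, n₂` such that
`H₁₂(v, ·) > H₁₂(0, ·)` whenever `|v| > c`; hence the infimum over any closed cone `Π₂ ∋ 0`
equals the infimum over `{v ∈ Π₂ : |v| ≤ c}` and every minimizer has norm at most `c`. -/
theorem H12_inf_on_bounded_domain
    (m₂ n₂ : ℕ) (hm : 0 < m₂) (hn : 0 < n₂)
    (δ M K : ℝ) (hδ : 0 < δ) (hM : 0 < M) (hK : 0 < K) :
    ∃ c > (0 : ℝ),
      ∀ (R₂ : Matrix (Fin m₂) (Fin m₂) ℝ) (B₂ : EuclideanSpace ℝ (Fin m₂))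
        (E : EuclideanSpace ℝ (Fin n₂)) (F : Matrix (Fin n₂) (Fin m₂) ℝ)
        (P₁ P₂ : ℝ) (Γ₁ Γ₂ : EuclideanSpace ℝ (Fin n₂)),
        (R₂ - δ • (1 : Matrix (Fin m₂) (Fin m₂) ℝ)).PosSemidef →
        frob R₂ ≤ K → ‖B₂‖ ≤ K → ‖E‖ ≤ K → frob F ≤ K →
        0 ≤ P₁ → P₁ ≤ M → 0 ≤ P₂ → P₂ ≤ M →
        (∀ k, 0 ≤ P₁ + Γ₁ k ∧ P₁ + Γ₁ k ≤ M) →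
        (∀ k, 0 ≤ P₂ + Γ₂ k ∧ P₂ + Γ₂ k ≤ M) →
        (∀ v : EuclideanSpace ℝ (Fin m₂), c < ‖v‖ →
            H12 R₂ B₂ E F (0 : EuclideanSpace ℝ (Fin m₂)) P₁ P₂ Γ₁ Γ₂ <
              H12 R₂ B₂ E F v P₁ P₂ Γ₁ Γ₂) ∧
          ∀ Cone2 : Set (EuclideanSpace ℝ (Fin m₂)),
            IsClosed Cone2 → (∀ v ∈ Cone2, ∀ l : ℝ, 0 ≤ l → l • v ∈ Cone2) →
            (0 : EuclideanSpace ℝ (Fin m₂)) ∈ Cone2 →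
            (sInf ((fun v => H12 R₂ B₂ E F v P₁ P₂ Γ₁ Γ₂) '' Cone2) =
                sInf ((fun v => H12 R₂ B₂ E F v P₁ P₂ Γ₁ Γ₂) ''
                  {v ∈ Cone2 | ‖v‖ ≤ c})) ∧
              ∀ v ∈ Cone2,
                (∀ w ∈ Cone2,
                    H12 R₂ B₂ E F v P₁ P₂ Γ₁ Γ₂ ≤ H12 R₂ B₂ E F w P₁ P₂ Γ₁ Γ₂) →
                ‖v‖ ≤ c := by
  obtain ⟨C₀, hC₀def⟩ : ∃ x : ℝ, x = n₂ * M + 2 * M * n₂ * K := ⟨_, rfl⟩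
  obtain ⟨C₁, hC₁def⟩ : ∃ x : ℝ, x = 2 * M * n₂ * K + 2 * M * K := ⟨_, rfl⟩
  obtain ⟨C₂, hC₂def⟩ : ∃ x : ℝ, x = n₂ * (2 * M * (1 + K) ^ 2 + 2 * M * K) := ⟨_, rfl⟩
  have hC₀ : 0 ≤ C₀ := by rw [hC₀def]; positivity
  have hC₁ : 0 ≤ C₁ := by rw [hC₁def]; positivity
  have hC₂ : 0 ≤ C₂ := by rw [hC₂def]; positivity
  obtain ⟨c, hcdef⟩ : ∃ x : ℝ, x = 1 + (C₀ + C₁ + C₂) / δ := ⟨_, rfl⟩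
  have hdivnn : 0 ≤ (C₀ + C₁ + C₂) / δ := by positivity
  have hc0 : 0 < c := by rw [hcdef]; linarith
  have hc1 : 1 ≤ c := by rw [hcdef]; linarith
  refine ⟨c, hc0, ?_⟩
  intro R₂ B₂ E F P₁ P₂ Γ₁ Γ₂ hpsd hR hB hE hF hP₁0 hP₁M hP₂0 hP₂M hΓ₁ hΓ₂
  have hlb := fun v => H12_lb δ M K hδ hM hK R₂ B₂ E F P₁ P₂ Γ₁ Γ₂ hpsd hB hE hF
    hP₁0 hP₁M hΓ₁ hΓ₂ v
  have hub := H12_zero_ub M K hM hK R₂ B₂ E F P₁ P₂ Γ₁ Γ₂ hE hP₁0 hP₁M hΓ₁ hΓ₂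
  have hceq : δ * c = δ + (C₀ + C₁ + C₂) := by
    rw [hcdef]; field_simp
  -- strict inequality part
  have hstrict : ∀ v : EuclideanSpace ℝ (Fin m₂), c < ‖v‖ →
      H12 R₂ B₂ E F (0 : EuclideanSpace ℝ (Fin m₂)) P₁ P₂ Γ₁ Γ₂ <
        H12 R₂ B₂ E F v P₁ P₂ Γ₁ Γ₂ := by
    intro v hv
    have ht1 : 1 ≤ ‖v‖ := le_of_lt (lt_of_le_of_lt hc1 hv)
    have ht0 : 0 < ‖v‖ := lt_of_lt_of_le one_pos ht1
    have hδt : δ + (C₀ + C₁ + C₂) < δ * ‖v‖ := by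
      have := mul_lt_mul_of_pos_left hv hδ
      rw [hceq] at this; linarith
    have hkey : C₂ < δ * ‖v‖ ^ 2 - C₁ * ‖v‖ - C₀ := by
      nlinarith [mul_lt_mul_of_pos_right hδt ht0,
        mul_nonneg (sub_nonneg.2 ht1) hC₀, mul_nonneg (sub_nonneg.2 ht1) hC₂,
        mul_nonneg (sub_nonneg.2 ht1) hδ.le]
    have h1 := hlb v
    rw [hC₀def, hC₁def, hC₂def] at hkey
    calc H12 R₂ B₂ E F (0 : EuclideanSpace ℝ (Fin m₂)) P₁ P₂ Γ₁ Γ₂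
        ≤ n₂ * (2 * M * (1 + K) ^ 2 + 2 * M * K) := hub
      _ < δ * ‖v‖ ^ 2 - (2 * M * n₂ * K + 2 * M * K) * ‖v‖ - (n₂ * M + 2 * M * n₂ * K) := by
          linarith
      _ ≤ _ := h1
  -- uniform lower bound (for BddBelow)
  obtain ⟨L, hLdef⟩ : ∃ x : ℝ, x = -C₀ - C₁ ^ 2 / (4 * δ) := ⟨_, rfl⟩
  have hLB : ∀ v : EuclideanSpace ℝ (Fin m₂), L ≤ H12 R₂ B₂ E F v P₁ P₂ Γ₁ Γ₂ := by
    intro v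
    have h1 := hlb v
    have hD : 4 * δ * (C₁ ^ 2 / (4 * δ)) = C₁ ^ 2 := by field_simp
    have ht0 : (0:ℝ) ≤ ‖v‖ := norm_nonneg v
    have h2 : L ≤ δ * ‖v‖ ^ 2 - C₁ * ‖v‖ - C₀ := by
      rw [hLdef]
      nlinarith [sq_nonneg (2 * δ * ‖v‖ - C₁), hD, hδ]
    rw [hC₀def, hC₁def] at h2
    linarith
  refine ⟨hstrict, ?_⟩
  intro Cone2 hclosed hcone h0mem
  set f : EuclideanSpace ℝ (Fin m₂) → ℝ := fun v => H12 R₂ B₂ E F v P₁ P₂ Γ₁ Γ₂ with hfdef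
  have hzero_mem_T : (0 : EuclideanSpace ℝ (Fin m₂)) ∈ {v ∈ Cone2 | ‖v‖ ≤ c} :=
    ⟨h0mem, by simp [le_of_lt hc0]⟩
  have hTS : f '' {v ∈ Cone2 | ‖v‖ ≤ c} ⊆ f '' Cone2 :=
    Set.image_mono fun x hx => hx.1
  have hTne : (f '' {v ∈ Cone2 | ‖v‖ ≤ c}).Nonempty := ⟨f 0, ⟨0, hzero_mem_T, rfl⟩⟩
  have hSne : (f '' Cone2).Nonempty := ⟨f 0, ⟨0, h0mem, rfl⟩⟩
  have hSbdd : BddBelow (f '' Cone2) := by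
    refine ⟨L, ?_⟩
    rintro x ⟨v, _, rfl⟩
    exact hLB v
  have hTbdd : BddBelow (f '' {v ∈ Cone2 | ‖v‖ ≤ c}) := hSbdd.mono hTS
  constructor
  · apply le_antisymm
    · exact csInf_le_csInf hSbdd hTne hTS
    · apply le_csInf hSne
      rintro x ⟨v, hv, rfl⟩
      by_cases h : ‖v‖ ≤ c
      · exact csInf_le hTbdd ⟨v, ⟨hv, h⟩, rfl⟩
      · have h2 : f 0 < f v := hstrict v (lt_of_not_ge h)
        exact le_trans (csInf_le hTbdd ⟨0, hzero_mem_T, rfl⟩) (le_of_lt h2)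
  · intro v hv hmin
    by_contra h
    push_neg at h
    have h1 := hstrict v h
    have h2 := hmin 0 h0mem
    exact absurd (lt_of_le_of_lt h2 h1) (lt_irrefl _)
end
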